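/- Let τ and ν be subword patterns and let φ be the shuffle pattern τ-ℓ-ν (where ℓ is greater than every letter of τ and of ν, and the letters of τ and ν are mutually incomparable). Then for all k ≥ 1, in ℚ[[x]]: A_φ(x;k)·(1 − x·A_τ(x;k−1))·(1 − x·A_ν(x;k−1)) = A_φ(x;k−1) − x·A_τ(x;k−1)·A_ν(x;k−1). -/

import Mathlib

/-- A word `σ : Fin n → Fin k` has an occurrence of the subword pattern `p : Fin m → Fin l`
at position `i` if `i + m ≤ n` and the corresponding letters are order-isomorphic to `p`. -/
def OccursAt {m l n k : ℕ} (p : Fin m → Fin l) (σ : Fin n → Fin k) (i : ℕ) : Prop :=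
  ∃ h : i + m ≤ n, ∀ a b : Fin m,
    (σ ⟨i + a, lt_of_lt_of_le (Nat.add_lt_add_left a.isLt i) h⟩ <
      σ ⟨i + b, lt_of_lt_of_le (Nat.add_lt_add_left b.isLt i) h⟩) ↔ p a < p b

/-- `σ` avoids the subword pattern `p`. -/
def AvoidsPat {m l n k : ℕ} (p : Fin m → Fin l) (σ : Fin n → Fin k) : Prop :=
  ∀ i : ℕ, ¬ OccursAt p σ i

/-- `σ` contains the shuffle pattern `τ-ℓ-ν`: there are an occurrence of `τ` at `i`,
a later position `pp` carrying a letter larger than all letters of the two occurrences,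
and a still later occurrence of `ν` at `q`. -/
def ContainsShuffle {m₁ r₁ m₂ r₂ n k : ℕ} (τ : Fin m₁ → Fin r₁) (ν : Fin m₂ → Fin r₂)
    (σ : Fin n → Fin k) : Prop :=
  ∃ (i pp q : ℕ) (hp : pp < n),
    i + m₁ ≤ pp ∧ pp < q ∧ q + m₂ ≤ n ∧ OccursAt τ σ i ∧ OccursAt ν σ q ∧
      ∀ (r : ℕ) (hr : r < n),
        ((i ≤ r ∧ r < i + m₁) ∨ (q ≤ r ∧ r < q + m₂)) → σ ⟨r, hr⟩ < σ ⟨pp, hp⟩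

/-- Generating function for the number of `k`-ary words avoiding the subword pattern `p`. -/
noncomputable def Apat {m l : ℕ} (p : Fin m → Fin l) (k : ℕ) : PowerSeries ℚ :=
  PowerSeries.mk fun n => (Nat.card {σ : Fin n → Fin k // AvoidsPat p σ} : ℚ)

/-- Generating function for the number of `k`-ary words avoiding the shuffle pattern
`τ-ℓ-ν`. -/
noncomputable def Ashuffle {m₁ r₁ m₂ r₂ : ℕ} (τ : Fin m₁ → Fin r₁) (ν : Fin m₂ → Fin r₂)
    (k : ℕ) : PowerSeries ℚ :=
  PowerSeries.mk fun n => (Nat.card {σ : Fin n → Fin k // ¬ ContainsShuffle τ ν σ} : ℚ)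

/-! ### List-level definitions -/

def KaryL (k : ℕ) (l : List ℕ) : Prop := ∀ x ∈ l, x < k

def OccL {m r : ℕ} (p : Fin m → Fin r) (l : List ℕ) (i : ℕ) : Prop :=
  i + m ≤ l.length ∧ ∀ a b : Fin m, (l.getD (i + a) 0 < l.getD (i + b) 0 ↔ p a < p b)

def AvL {m r : ℕ} (p : Fin m → Fin r) (l : List ℕ) : Prop := ∀ i, ¬ OccL p l i

def OccBL {m r : ℕ} (p : Fin m → Fin r) (K : ℕ) (l : List ℕ) (i : ℕ) : Prop :=
  OccL p l i ∧ ∀ j, i ≤ j → j < i + m → l.getD j 0 < K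

def AvBL {m r : ℕ} (p : Fin m → Fin r) (K : ℕ) (l : List ℕ) : Prop := ∀ i, ¬ OccBL p K l i

def CSL {m₁ r₁ m₂ r₂ : ℕ} (τ : Fin m₁ → Fin r₁) (ν : Fin m₂ → Fin r₂) (l : List ℕ) : Prop :=
  ∃ i pp q, i + m₁ ≤ pp ∧ pp < q ∧ q + m₂ ≤ l.length ∧ OccL τ l i ∧ OccL ν l q ∧
    ∀ j, ((i ≤ j ∧ j < i + m₁) ∨ (q ≤ j ∧ j < q + m₂)) → l.getD j 0 < l.getD pp 0

/-! ### getD lemmas for concatenations -/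

section Concat

variable {l₁ l₂ : List ℕ} {K : ℕ}

lemma clen : (l₁ ++ K :: l₂).length = l₁.length + 1 + l₂.length := by
  simp; omega

lemma getD_concat_left {j : ℕ} (h : j < l₁.length) :
    (l₁ ++ K :: l₂).getD j 0 = l₁.getD j 0 :=
  List.getD_append _ _ _ _ h

lemma getD_concat_mid : (l₁ ++ K :: l₂).getD l₁.length 0 = K := by
  rw [List.getD_append_right _ _ _ _ le_rfl]
  simp

lemma getD_concat_right (j : ℕ) :
    (l₁ ++ K :: l₂).getD (l₁.length + 1 + j) 0 = l₂.getD j 0 := by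
  rw [List.getD_append_right _ _ _ _ (by omega)]
  have h : l₁.length + 1 + j - l₁.length = j + 1 := by omega
  rw [h]
  rfl

lemma getD_lt_of_kary {c : ℕ} {l : List ℕ} (hk : KaryL c l) {j : ℕ} (h : j < l.length) :
    l.getD j 0 < c := by
  rw [List.getD_eq_getElem _ _ h]
  exact hk _ (List.getElem_mem h)

lemma occ_concat_left {m r : ℕ} {p : Fin m → Fin r} {i : ℕ} (h : i + m ≤ l₁.length) :
    OccL p (l₁ ++ K :: l₂) i ↔ OccL p l₁ i := by
  have hc := clen (l₁ := l₁) (l₂ := l₂) (K := K)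
  have hg : ∀ a : Fin m, (l₁ ++ K :: l₂).getD (i + a) 0 = l₁.getD (i + a) 0 := by
    intro a
    have := a.isLt
    exact getD_concat_left (by omega)
  constructor
  · rintro ⟨-, h2⟩
    exact ⟨h, fun a b => by rw [← hg a, ← hg b]; exact h2 a b⟩
  · rintro ⟨-, h2⟩
    exact ⟨by omega, fun a b => by rw [hg a, hg b]; exact h2 a b⟩

lemma occ_concat_right {m r : ℕ} {p : Fin m → Fin r} {i : ℕ} :
    OccL p (l₁ ++ K :: l₂) (l₁.length + 1 + i) ↔ OccL p l₂ i := by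
  have hc := clen (l₁ := l₁) (l₂ := l₂) (K := K)
  have hg : ∀ a : Fin m, (l₁ ++ K :: l₂).getD (l₁.length + 1 + i + a) 0 = l₂.getD (i + a) 0 := by
    intro a
    have h : l₁.length + 1 + i + (a : ℕ) = l₁.length + 1 + (i + a) := by omega
    rw [h, getD_concat_right]
  constructor
  · rintro ⟨h1, h2⟩
    exact ⟨by omega, fun a b => by rw [← hg a, ← hg b]; exact h2 a b⟩
  · rintro ⟨h1, h2⟩
    exact ⟨by omega, fun a b => by rw [hg a, hg b]; exact h2 a b⟩

lemma below_split {m r : ℕ} {p : Fin m → Fin r} {i : ℕ}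
    (hocc : OccL p (l₁ ++ K :: l₂) i)
    (hb : ∀ j, i ≤ j → j < i + m → (l₁ ++ K :: l₂).getD j 0 < K) :
    i + m ≤ l₁.length ∨ l₁.length + 1 ≤ i := by
  by_contra hcon
  push_neg at hcon
  have h1 : i ≤ l₁.length := by omega
  have h2 : l₁.length < i + m := by omega
  have := hb l₁.length h1 h2
  rw [getD_concat_mid] at this
  omega

lemma avbl_concat {m r : ℕ} {ν : Fin m → Fin r} (hl₁ : KaryL K l₁) :
    AvBL ν K (l₁ ++ K :: l₂) ↔ AvL ν l₁ ∧ AvBL ν K l₂ := by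
  constructor
  · intro h
    constructor
    · intro i hocc
      refine h i ⟨(occ_concat_left hocc.1).mpr hocc, ?_⟩
      intro j hj1 hj2
      have hjl : j < l₁.length := by have := hocc.1; omega
      rw [getD_concat_left hjl]
      exact getD_lt_of_kary hl₁ hjl
    · intro i hocc
      refine h (l₁.length + 1 + i) ⟨occ_concat_right.mpr hocc.1, ?_⟩
      intro j hj1 hj2
      obtain ⟨j', rfl⟩ : ∃ j', j = l₁.length + 1 + j' := ⟨j - l₁.length - 1, by omega⟩
      rw [getD_concat_right]
      exact hocc.2 j' (by omega) (by omega)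
  · rintro ⟨h₁, h₂⟩ i ⟨hocc, hb⟩
    rcases below_split hocc hb with h | h
    · exact h₁ i ((occ_concat_left h).mp hocc)
    · obtain ⟨i', rfl⟩ : ∃ i', i = l₁.length + 1 + i' := ⟨i - l₁.length - 1, by omega⟩
      refine h₂ i' ⟨occ_concat_right.mp hocc, ?_⟩
      intro j hj1 hj2
      have := hb (l₁.length + 1 + j) (by omega) (by omega)
      rwa [getD_concat_right] at this

lemma csl_imp_not_avl {m₁ r₁ m₂ r₂ : ℕ} {τ : Fin m₁ → Fin r₁} {ν : Fin m₂ → Fin r₂}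
    {l : List ℕ} (h : CSL τ ν l) : ¬ AvL τ l := by
  obtain ⟨i, pp, q, h1, h2, h3, h4, h5, h6⟩ := h
  exact fun hav => hav i h4

lemma avbl_imp_not_csl {m₁ r₁ m₂ r₂ : ℕ} {τ : Fin m₁ → Fin r₁} {ν : Fin m₂ → Fin r₂}
    {l : List ℕ} (hk : KaryL (K + 1) l) (hav : AvBL ν K l) : ¬ CSL τ ν l := by
  rintro ⟨i, pp, q, h1, h2, h3, h4, h5, h6⟩
  have hpplen : pp < l.length := by omega
  have hpp : l.getD pp 0 < K + 1 := getD_lt_of_kary hk hpplen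
  refine hav q ⟨h5, fun j hj1 hj2 => ?_⟩
  have := h6 j (Or.inr ⟨hj1, hj2⟩)
  omega

lemma csl_concat {m₁ r₁ m₂ r₂ : ℕ} {τ : Fin m₁ → Fin r₁} {ν : Fin m₂ → Fin r₂}
    (hl₁ : KaryL K l₁) (hl₂ : KaryL (K + 1) l₂) :
    CSL τ ν (l₁ ++ K :: l₂) ↔
      CSL τ ν l₁ ∨ CSL τ ν l₂ ∨ (¬ AvL τ l₁ ∧ ¬ AvBL ν K l₂) := by
  have hclen : (l₁ ++ K :: l₂).length = l₁.length + 1 + l₂.length := clen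
  constructor
  · rintro ⟨i, pp, q, h1, h2, h3, hoτ, hoν, hlet⟩
    have hpplen : pp < (l₁ ++ K :: l₂).length := by omega
    have hppK : (l₁ ++ K :: l₂).getD pp 0 ≤ K := by
      have hkc : KaryL (K + 1) (l₁ ++ K :: l₂) := by
        intro x hx
        rcases List.mem_append.mp hx with h | h
        · exact lt_trans (hl₁ x h) (Nat.lt_succ_self K)
        · rcases List.mem_cons.mp h with rfl | h
          · omega
          · exact hl₂ x h
      have := getD_lt_of_kary hkc hpplen
      omega
    have hsplitτ : i + m₁ ≤ l₁.length ∨ l₁.length + 1 ≤ i :=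
      below_split hoτ (fun j hj1 hj2 => lt_of_lt_of_le (hlet j (Or.inl ⟨hj1, hj2⟩)) hppK)
    rcases hsplitτ with hτ | hτ
    · have hsplitν : q + m₂ ≤ l₁.length ∨ l₁.length + 1 ≤ q :=
        below_split hoν (fun j hj1 hj2 => lt_of_lt_of_le (hlet j (Or.inr ⟨hj1, hj2⟩)) hppK)
      rcases hsplitν with hν | hν
      · left
        have hpp1 : pp < l₁.length := by omega
        refine ⟨i, pp, q, h1, h2, by omega, (occ_concat_left hτ).mp hoτ,
          (occ_concat_left hν).mp hoν, ?_⟩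
        intro j hj
        have hjlt : j < l₁.length := by rcases hj with ⟨a, b⟩ | ⟨a, b⟩ <;> omega
        have := hlet j hj
        rwa [getD_concat_left hjlt, getD_concat_left hpp1] at this
      · right; right
        refine ⟨fun hav => hav i ((occ_concat_left hτ).mp hoτ), ?_⟩
        intro hav
        obtain ⟨q', rfl⟩ : ∃ q', q = l₁.length + 1 + q' := ⟨q - l₁.length - 1, by omega⟩
        refine hav q' ⟨occ_concat_right.mp hoν, ?_⟩
        intro j hj1 hj2
        have := hlet (l₁.length + 1 + j) (Or.inr ⟨by omega, by omega⟩)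
        rw [getD_concat_right] at this
        exact lt_of_lt_of_le this hppK
    · right; left
      obtain ⟨i', rfl⟩ : ∃ x, i = l₁.length + 1 + x := ⟨i - l₁.length - 1, by omega⟩
      obtain ⟨pp', rfl⟩ : ∃ x, pp = l₁.length + 1 + x := ⟨pp - l₁.length - 1, by omega⟩
      obtain ⟨q', rfl⟩ : ∃ x, q = l₁.length + 1 + x := ⟨q - l₁.length - 1, by omega⟩
      refine ⟨i', pp', q', by omega, by omega, by omega, occ_concat_right.mp hoτ,
        occ_concat_right.mp hoν, ?_⟩
      intro j hj
      have := hlet (l₁.length + 1 + j)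
        (by rcases hj with ⟨a, b⟩ | ⟨a, b⟩
            exacts [Or.inl ⟨by omega, by omega⟩, Or.inr ⟨by omega, by omega⟩])
      rwa [getD_concat_right, getD_concat_right] at this
  · rintro (⟨i, pp, q, h1, h2, h3, h4, h5, h6⟩ | ⟨i, pp, q, h1, h2, h3, h4, h5, h6⟩ | ⟨hτ, hν⟩)
    · have hpp1 : pp < l₁.length := by omega
      refine ⟨i, pp, q, h1, h2, by omega, (occ_concat_left h4.1).mpr h4,
        (occ_concat_left h3).mpr h5, ?_⟩
      intro j hj
      have hjl : j < l₁.length := by rcases hj with ⟨a, b⟩ | ⟨a, b⟩ <;> omega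
      rw [getD_concat_left hjl, getD_concat_left hpp1]
      exact h6 j hj
    · refine ⟨l₁.length + 1 + i, l₁.length + 1 + pp, l₁.length + 1 + q, by omega, by omega,
        by omega, occ_concat_right.mpr h4, occ_concat_right.mpr h5, ?_⟩
      intro j hj
      have hjge : l₁.length + 1 ≤ j := by rcases hj with ⟨a, b⟩ | ⟨a, b⟩ <;> omega
      obtain ⟨j', rfl⟩ : ∃ x, j = l₁.length + 1 + x := ⟨j - l₁.length - 1, by omega⟩
      rw [getD_concat_right, getD_concat_right]
      exact h6 j' (by rcases hj with ⟨a, b⟩ | ⟨a, b⟩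
                      exacts [Or.inl ⟨by omega, by omega⟩, Or.inr ⟨by omega, by omega⟩])
    · obtain ⟨i, hoτ⟩ := not_forall_not.mp hτ
      obtain ⟨q', hoν⟩ := not_forall_not.mp hν
      have hν2 := hoν.1.1
      refine ⟨i, l₁.length, l₁.length + 1 + q', hoτ.1, by omega, by omega,
        (occ_concat_left hoτ.1).mpr hoτ, occ_concat_right.mpr hoν.1, ?_⟩
      intro j hj
      rw [getD_concat_mid]
      rcases hj with ⟨a, b⟩ | ⟨a, b⟩
      · have hjl : j < l₁.length := by have := hoτ.1; omega
        rw [getD_concat_left hjl]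
        exact getD_lt_of_kary hl₁ hjl
      · obtain ⟨j', rfl⟩ : ∃ x, j = l₁.length + 1 + x := ⟨j - l₁.length - 1, by omega⟩
        rw [getD_concat_right]
        exact hoν.2 j' (by omega) (by omega)

lemma notCSL_concat_iff {m₁ r₁ m₂ r₂ : ℕ} {τ : Fin m₁ → Fin r₁} {ν : Fin m₂ → Fin r₂}
    (hl₁ : KaryL K l₁) (hl₂ : KaryL (K + 1) l₂) :
    ¬ CSL τ ν (l₁ ++ K :: l₂) ↔
      ((AvL τ l₁ ∧ ¬ CSL τ ν l₂) ∨ ((¬ AvL τ l₁ ∧ ¬ CSL τ ν l₁) ∧ AvBL ν K l₂)) := by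
  rw [csl_concat hl₁ hl₂]
  push_neg
  constructor
  · rintro ⟨h1, h2, h3⟩
    by_cases hA : AvL τ l₁
    · exact Or.inl ⟨hA, h2⟩
    · exact Or.inr ⟨⟨hA, h1⟩, h3 hA⟩
  · rintro (⟨hA, h2⟩ | ⟨⟨hnA, h1⟩, hB⟩)
    · exact ⟨fun hc => csl_imp_not_avl hc hA, h2, fun hnA => absurd hA hnA⟩
    · exact ⟨h1, avbl_imp_not_csl hl₂ hB, fun _ => hB⟩

end Concat

/-! ### transfer from `Fin`-words to lists -/

section Transfer

variable {n k : ℕ}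

def wl (σ : Fin n → Fin k) : List ℕ := List.ofFn (fun i => (σ i : ℕ))

lemma wl_length (σ : Fin n → Fin k) : (wl σ).length = n := by simp [wl]

lemma wl_getD (σ : Fin n → Fin k) {j : ℕ} (h : j < n) : (wl σ).getD j 0 = σ ⟨j, h⟩ := by
  rw [List.getD_eq_getElem _ _ (by simpa [wl] using h)]
  simp [wl]

lemma occursAt_iff {m r : ℕ} (p : Fin m → Fin r) (σ : Fin n → Fin k) (i : ℕ) :
    OccursAt p σ i ↔ OccL p (wl σ) i := by
  unfold OccursAt OccL
  rw [wl_length]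
  constructor
  · rintro ⟨h, h2⟩
    refine ⟨h, fun a b => ?_⟩
    have ha := a.isLt
    have hb := b.isLt
    rw [wl_getD σ (by omega), wl_getD σ (by omega), ← Fin.lt_def]
    exact h2 a b
  · rintro ⟨h, h2⟩
    refine ⟨h, fun a b => ?_⟩
    have ha := a.isLt
    have hb := b.isLt
    have := h2 a b
    rw [wl_getD σ (by omega), wl_getD σ (by omega), ← Fin.lt_def] at this
    exact this

lemma avoids_iff {m r : ℕ} (p : Fin m → Fin r) (σ : Fin n → Fin k) :
    AvoidsPat p σ ↔ AvL p (wl σ) :=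
  forall_congr' fun i => not_congr (occursAt_iff p σ i)

lemma contains_iff {m₁ r₁ m₂ r₂ : ℕ} (τ : Fin m₁ → Fin r₁) (ν : Fin m₂ → Fin r₂)
    (σ : Fin n → Fin k) : ContainsShuffle τ ν σ ↔ CSL τ ν (wl σ) := by
  unfold ContainsShuffle CSL
  rw [wl_length]
  constructor
  · rintro ⟨i, pp, q, hp, h1, h2, h3, h4, h5, h6⟩
    refine ⟨i, pp, q, h1, h2, h3, (occursAt_iff _ _ _).mp h4, (occursAt_iff _ _ _).mp h5, ?_⟩
    intro j hj
    have hjn : j < n := by rcases hj with ⟨a, b⟩ | ⟨a, b⟩ <;> omega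
    rw [wl_getD σ hjn, wl_getD σ hp, ← Fin.lt_def]
    exact h6 j hjn hj
  · rintro ⟨i, pp, q, h1, h2, h3, h4, h5, h6⟩
    have hp : pp < n := by omega
    refine ⟨i, pp, q, hp, h1, h2, h3, (occursAt_iff _ _ _).mpr h4, (occursAt_iff _ _ _).mpr h5, ?_⟩
    intro j hj hcond
    have := h6 j hcond
    rw [wl_getD σ hj, wl_getD σ hp, ← Fin.lt_def] at this
    exact this

def wordEquiv (n k : ℕ) : (Fin n → Fin k) ≃ {l : List ℕ // l.length = n ∧ KaryL k l} where
  toFun σ := ⟨wl σ, wl_length σ, by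
    intro x hx
    rw [wl, List.mem_ofFn] at hx
    obtain ⟨i, rfl⟩ := hx
    exact (σ i).isLt⟩
  invFun l i := ⟨l.1.getD i 0, by
    have hi : (i : ℕ) < l.1.length := by rw [l.2.1]; exact i.isLt
    rw [List.getD_eq_getElem _ _ hi]
    exact l.2.2 _ (List.getElem_mem hi)⟩
  left_inv σ := by
    funext i
    apply Fin.ext
    show (wl σ).getD i 0 = (σ i : ℕ)
    rw [wl_getD σ i.isLt, Fin.eta]
  right_inv l := by
    apply Subtype.ext
    apply List.ext_getElem (by simp [wl, l.2.1])
    intro j h1 h2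
    simp only [wl, List.getElem_ofFn]
    exact List.getD_eq_getElem l.1 0 h2

end Transfer

/-! ### counting -/

noncomputable def cnt (k : ℕ) (P : List ℕ → Prop) (n : ℕ) : ℕ :=
  Nat.card {l : List ℕ // l.length = n ∧ KaryL k l ∧ P l}

noncomputable def gf (k : ℕ) (P : List ℕ → Prop) : PowerSeries ℚ :=
  PowerSeries.mk fun n => (cnt k P n : ℚ)

instance finiteWordsBase (n k : ℕ) : Finite {l : List ℕ // l.length = n ∧ KaryL k l} :=
  Finite.of_equiv _ (wordEquiv n k)

instance finiteWords (n k : ℕ) (P : List ℕ → Prop) :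
    Finite {l : List ℕ // l.length = n ∧ KaryL k l ∧ P l} := by
  apply Finite.of_injective
    (fun x : {l : List ℕ // l.length = n ∧ KaryL k l ∧ P l} =>
      (⟨x.1, x.2.1, x.2.2.1⟩ : {l : List ℕ // l.length = n ∧ KaryL k l}))
  intro a b h
  simp only [Subtype.mk.injEq] at h
  exact Subtype.ext h

lemma Apat_eq {m r : ℕ} (p : Fin m → Fin r) (k : ℕ) : Apat p k = gf k (AvL p) := by
  apply PowerSeries.ext
  intro n
  simp only [Apat, gf, PowerSeries.coeff_mk]
  congr 1
  apply Nat.card_congr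
  exact ((wordEquiv n k).subtypeEquiv (fun σ => avoids_iff p σ)).trans
    ((Equiv.subtypeSubtypeEquivSubtypeInter _ _).trans
      (Equiv.subtypeEquivRight fun l => and_assoc))

lemma Ashuffle_eq {m₁ r₁ m₂ r₂ : ℕ} (τ : Fin m₁ → Fin r₁) (ν : Fin m₂ → Fin r₂) (k : ℕ) :
    Ashuffle τ ν k = gf k (fun l => ¬ CSL τ ν l) := by
  apply PowerSeries.ext
  intro n
  simp only [Ashuffle, gf, PowerSeries.coeff_mk]
  congr 1
  apply Nat.card_congr
  exact ((wordEquiv n k).subtypeEquiv (fun σ => not_congr (contains_iff τ ν σ))).trans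
    ((Equiv.subtypeSubtypeEquivSubtypeInter _ _).trans
      (Equiv.subtypeEquivRight fun l => and_assoc))

noncomputable def subtypeOrEquiv' {γ : Type*} (R S : γ → Prop) (h : ∀ q, R q → ¬ S q) :
    {q // R q ∨ S q} ≃ {q // R q} ⊕ {q // S q} := by
  classical
  exact
  { toFun := fun x => if hr : R x.1 then Sum.inl ⟨x.1, hr⟩ else Sum.inr ⟨x.1, x.2.resolve_left hr⟩
    invFun := Sum.elim (fun a => ⟨a.1, Or.inl a.2⟩) (fun b => ⟨b.1, Or.inr b.2⟩)
    left_inv := fun x => by by_cases hr : R x.1 <;> simp [hr]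
    right_inv := fun x => by
      rcases x with a | b
      · simp [a.2]
      · have hnr : ¬ R b.1 := fun hr => h _ hr b.2
        simp [hnr] }

lemma cnt_split (k n : ℕ) (P Q : List ℕ → Prop) :
    cnt k P n = cnt k (fun l => P l ∧ Q l) n + cnt k (fun l => P l ∧ ¬ Q l) n := by
  classical
  rw [cnt, cnt, cnt, ← Nat.card_sum]
  apply Nat.card_congr
  refine (Equiv.subtypeEquivRight (q := fun l : List ℕ =>
      (l.length = n ∧ KaryL k l ∧ (P l ∧ Q l)) ∨ (l.length = n ∧ KaryL k l ∧ (P l ∧ ¬ Q l)))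
      (fun l => by tauto)).trans ?_
  exact subtypeOrEquiv' _ _ (fun l h₁ h₂ => h₂.2.2.2 h₁.2.2.2)

lemma cnt_congr {k n : ℕ} {P Q : List ℕ → Prop}
    (h : ∀ l : List ℕ, l.length = n → KaryL k l → (P l ↔ Q l)) : cnt k P n = cnt k Q n := by
  rw [cnt, cnt]
  apply Nat.card_congr
  exact Equiv.subtypeEquivRight fun l => by
    constructor
    · rintro ⟨h1, h2, h3⟩; exact ⟨h1, h2, (h l h1 h2).mp h3⟩
    · rintro ⟨h1, h2, h3⟩; exact ⟨h1, h2, (h l h1 h2).mpr h3⟩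

lemma cnt_drop (K n : ℕ) (P : List ℕ → Prop) :
    cnt (K + 1) (fun l => P l ∧ K ∉ l) n = cnt K P n := by
  rw [cnt, cnt]
  apply Nat.card_congr
  apply Equiv.subtypeEquivRight
  intro l
  constructor
  · rintro ⟨h1, h2, h3, h4⟩
    refine ⟨h1, fun x hx => ?_, h3⟩
    have hlt := h2 x hx
    have hne : x ≠ K := fun hxK => h4 (hxK ▸ hx)
    omega
  · rintro ⟨h1, h2, h3⟩
    exact ⟨h1, fun x hx => lt_trans (h2 x hx) (Nat.lt_succ_self _), h3,
      fun hK => lt_irrefl K (h2 K hK)⟩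

lemma cnt_zero_congr {k k' : ℕ} {P Q : List ℕ → Prop} (h : P [] ↔ Q []) :
    cnt k P 0 = cnt k' Q 0 := by
  rw [cnt, cnt]
  apply Nat.card_congr
  apply Equiv.subtypeEquivRight
  intro l
  constructor
  · rintro ⟨h1, h2, h3⟩
    obtain rfl : l = [] := List.length_eq_zero_iff.mp h1
    exact ⟨rfl, by intro x hx; simp at hx, h.mp h3⟩
  · rintro ⟨h1, h2, h3⟩
    obtain rfl : l = [] := List.length_eq_zero_iff.mp h1
    exact ⟨rfl, by intro x hx; simp at hx, h.mpr h3⟩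

lemma nat_card_sigma {β : Type*} [Fintype β] (f : β → Type*) [∀ b, Finite (f b)] :
    Nat.card ((b : β) × f b) = ∑ b, Nat.card (f b) := by
  classical
  letI : ∀ b, Fintype (f b) := fun b => Fintype.ofFinite _
  rw [Nat.card_eq_fintype_card, Fintype.card_sigma]
  exact Finset.sum_congr rfl fun b _ => (Nat.card_eq_fintype_card).symm

/-! ### splitting at the first occurrence of the letter `K` -/

lemma takeWhile_concat (K : ℕ) (l₁ l₂ : List ℕ) (h : ∀ x ∈ l₁, x ≠ K) :
    (l₁ ++ K :: l₂).takeWhile (fun y => decide (y ≠ K)) = l₁ ∧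
    (l₁ ++ K :: l₂).dropWhile (fun y => decide (y ≠ K)) = K :: l₂ := by
  induction l₁ with
  | nil => simp
  | cons a t ih =>
    have ha : a ≠ K := h a (by simp)
    have iht := ih (fun x hx => h x (by simp [hx]))
    rw [List.cons_append, List.takeWhile_cons, List.dropWhile_cons,
      if_pos (by simp [ha]), if_pos (by simp [ha])]
    exact ⟨by rw [iht.1], iht.2⟩

lemma split_spec {K : ℕ} {l : List ℕ} (h : K ∈ l) :
    l = l.takeWhile (fun y => decide (y ≠ K)) ++
        K :: (l.dropWhile (fun y => decide (y ≠ K))).tail := by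
  have hd : l.dropWhile (fun y => decide (y ≠ K)) ≠ [] := by
    intro hnil
    have htw := List.takeWhile_append_dropWhile (p := fun y => decide (y ≠ K)) (l := l)
    rw [hnil, List.append_nil] at htw
    rw [← htw] at h
    have := List.mem_takeWhile_imp h
    simp at this
  have hh : (l.dropWhile (fun y => decide (y ≠ K))).head hd = K := by
    have := List.head_dropWhile_not (fun y => decide (y ≠ K)) (l := l) hd
    simpa using this
  have hct := List.cons_head_tail hd
  rw [hh] at hct
  rw [hct]
  exact (List.takeWhile_append_dropWhile (l := l)).symm

noncomputable def fiberEquiv (K : ℕ) (P : List ℕ → Prop) (n : ℕ) (p : ℕ × ℕ)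
    (hp : p.1 + p.2 = n) :
    {x : {l : List ℕ // l.length = n + 1 ∧ KaryL (K + 1) l ∧ (P l ∧ K ∈ l)} //
        (x.1.takeWhile (fun y => decide (y ≠ K))).length = p.1} ≃
    {q : {l₁ : List ℕ // l₁.length = p.1 ∧ KaryL K l₁} ×
         {l₂ : List ℕ // l₂.length = p.2 ∧ KaryL (K + 1) l₂} // P (q.1.1 ++ K :: q.2.1)} where
  toFun x := by
    refine ⟨⟨⟨x.1.1.takeWhile (fun y => decide (y ≠ K)), x.2, ?_⟩,
             ⟨(x.1.1.dropWhile (fun y => decide (y ≠ K))).tail, ?_, ?_⟩⟩, ?_⟩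
    · intro y hy
      have hne : y ≠ K := by simpa using List.mem_takeWhile_imp hy
      have hmem : y ∈ x.1.1 := (List.takeWhile_sublist _).subset hy
      have := x.1.2.2.1 y hmem
      omega
    · have hs := split_spec (K := K) x.1.2.2.2.2
      have hl := congrArg List.length hs
      rw [clen] at hl
      have h1 := x.1.2.1
      have h2 := x.2
      omega
    · intro y hy
      have hmem : y ∈ x.1.1 :=
        ((List.tail_sublist _).trans (List.dropWhile_sublist _)).subset hy
      exact x.1.2.2.1 y hmem
    · have hs := split_spec (K := K) x.1.2.2.2.2
      rw [← hs]
      exact x.1.2.2.2.1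
  invFun q := by
    refine ⟨⟨q.1.1.1 ++ K :: q.1.2.1, ?_, ?_, q.2, by simp⟩, ?_⟩
    · rw [clen, q.1.1.2.1, q.1.2.2.1]; omega
    · intro y hy
      rcases List.mem_append.mp hy with h | h
      · have := q.1.1.2.2 y h; omega
      · rcases List.mem_cons.mp h with rfl | h
        · omega
        · exact q.1.2.2.2 y h
    · have := (takeWhile_concat K q.1.1.1 q.1.2.1
        (fun x hx => Nat.ne_of_lt (q.1.1.2.2 x hx))).1
      rw [this, q.1.1.2.1]
  left_inv x := by
    apply Subtype.ext
    apply Subtype.ext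
    exact (split_spec (K := K) x.1.2.2.2.2).symm
  right_inv q := by
    apply Subtype.ext
    have htc := takeWhile_concat K q.1.1.1 q.1.2.1
      (fun x hx => Nat.ne_of_lt (q.1.1.2.2 x hx))
    apply Prod.ext
    · apply Subtype.ext
      exact htc.1
    · apply Subtype.ext
      show ((q.1.1.1 ++ K :: q.1.2.1).dropWhile (fun y => decide (y ≠ K))).tail = q.1.2.1
      rw [htc.2]
      rfl

lemma cnt_mem_split (K n : ℕ) (P : List ℕ → Prop) :
    cnt (K + 1) (fun l => P l ∧ K ∈ l) (n + 1) =
      ∑ p ∈ Finset.HasAntidiagonal.antidiagonal n,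
        Nat.card {q : {l₁ : List ℕ // l₁.length = p.1 ∧ KaryL K l₁} ×
                      {l₂ : List ℕ // l₂.length = p.2 ∧ KaryL (K + 1) l₂} //
                  P (q.1.1 ++ K :: q.2.1)} := by
  classical
  rw [cnt]
  have hlen : ∀ x : {l : List ℕ // l.length = n + 1 ∧ KaryL (K + 1) l ∧ (P l ∧ K ∈ l)},
      (x.1.takeWhile (fun y => decide (y ≠ K))).length +
        (x.1.dropWhile (fun y => decide (y ≠ K))).tail.length = n := by
    intro x
    have hs := split_spec (K := K) x.2.2.2.2
    have hl := congrArg List.length hs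
    rw [clen] at hl
    have h1 := x.2.1
    omega
  let f : {l : List ℕ // l.length = n + 1 ∧ KaryL (K + 1) l ∧ (P l ∧ K ∈ l)} →
      ↑(Finset.HasAntidiagonal.antidiagonal n) := fun x =>
    ⟨((x.1.takeWhile (fun y => decide (y ≠ K))).length,
      (x.1.dropWhile (fun y => decide (y ≠ K))).tail.length), by
        rw [Finset.HasAntidiagonal.mem_antidiagonal]
        exact hlen x⟩
  rw [Nat.card_congr (Equiv.sigmaFiberEquiv f).symm, nat_card_sigma,
    ← Finset.sum_coe_sort (Finset.HasAntidiagonal.antidiagonal n)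
      (fun p => Nat.card {q : {l₁ : List ℕ // l₁.length = p.1 ∧ KaryL K l₁} ×
                      {l₂ : List ℕ // l₂.length = p.2 ∧ KaryL (K + 1) l₂} //
                  P (q.1.1 ++ K :: q.2.1)})]
  apply Finset.sum_congr rfl
  intro b _
  apply Nat.card_congr
  have hb : (b : ℕ × ℕ).1 + (b : ℕ × ℕ).2 = n := Finset.HasAntidiagonal.mem_antidiagonal.mp b.2
  refine (Equiv.subtypeEquivRight (q := fun x => 
      (x.1.takeWhile (fun y => decide (y ≠ K))).length = (b : ℕ × ℕ).1) ?_).trans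
    (fiberEquiv K P n b hb)
  intro x
  constructor
  · intro h
    have := congrArg Subtype.val h
    exact congrArg Prod.fst this
  · intro h
    apply Subtype.ext
    refine Prod.ext h ?_
    show (x.1.dropWhile (fun y => decide (y ≠ K))).tail.length = (b : ℕ × ℕ).2
    have h2 := hlen x
    omega

def prodSubtypeE {α β : Type*} {A : α → Prop} {B : β → Prop} (R : α → Prop) (S : β → Prop) :
    {q : {a // A a} × {b // B b} // R q.1.1 ∧ S q.2.1} ≃ {a // A a ∧ R a} × {b // B b ∧ S b} where
  toFun q := (⟨q.1.1.1, q.1.1.2, q.2.1⟩, ⟨q.1.2.1, q.1.2.2, q.2.2⟩)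
  invFun q := ⟨(⟨q.1.1, q.1.2.1⟩, ⟨q.2.1, q.2.2.1⟩), q.1.2.2, q.2.2.2⟩
  left_inv q := rfl
  right_inv q := rfl

lemma card_pair_cnt {K k' i j : ℕ} (R S : List ℕ → Prop) :
    Nat.card ({l // (l.length = i ∧ KaryL K l) ∧ R l} × {l // (l.length = j ∧ KaryL k' l) ∧ S l})
      = cnt K R i * cnt k' S j := by
  rw [Nat.card_prod]
  congr 1
  · exact Nat.card_congr (Equiv.subtypeEquivRight fun l => and_assoc)
  · exact Nat.card_congr (Equiv.subtypeEquivRight fun l => and_assoc)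

/-! ### the two recursions and the final assembly -/

instance finiteWords2 (n k : ℕ) (P : List ℕ → Prop) :
    Finite {l : List ℕ // (l.length = n ∧ KaryL k l) ∧ P l} :=
  Finite.of_equiv {l : List ℕ // l.length = n ∧ KaryL k l ∧ P l}
    (Equiv.subtypeEquivRight fun l => and_assoc.symm)

section MainRec

variable {m₁ r₁ m₂ r₂ : ℕ} (τ : Fin m₁ → Fin r₁) (ν : Fin m₂ → Fin r₂) (K : ℕ)

lemma avbl_nil_iff : AvBL ν K ([] : List ℕ) ↔ AvL ν ([] : List ℕ) := by
  constructor
  · intro h i hocc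
    refine h i ⟨hocc, ?_⟩
    intro j hj1 hj2
    have hlen := hocc.1
    simp only [List.length_nil] at hlen
    omega
  · exact fun h i hocc => h i hocc.1

lemma avbl_of_kary {l : List ℕ} (hK : KaryL K l) : AvBL ν K l ↔ AvL ν l := by
  constructor
  · intro h i hocc
    exact h i ⟨hocc, fun j hj1 hj2 => getD_lt_of_kary hK (by have := hocc.1; omega)⟩
  · exact fun h i hocc => h i hocc.1

lemma coeff_gf (k : ℕ) (P : List ℕ → Prop) (n : ℕ) :
    PowerSeries.coeff n (gf k P) = (cnt k P n : ℚ) := by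
  simp [gf]

lemma coeff_XY (f g : PowerSeries ℚ) (n : ℕ) :
    PowerSeries.coeff (n + 1) (PowerSeries.X * f * g) =
      ∑ p ∈ Finset.HasAntidiagonal.antidiagonal n, PowerSeries.coeff p.1 f * PowerSeries.coeff p.2 g := by
  rw [mul_assoc, PowerSeries.coeff_succ_X_mul, PowerSeries.coeff_mul]

lemma coeff_XY_zero (f g : PowerSeries ℚ) :
    PowerSeries.coeff 0 (PowerSeries.X * f * g) = 0 := by
  rw [mul_assoc, PowerSeries.coeff_zero_X_mul]

lemma recursion_Y : gf (K + 1) (AvBL ν K) =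
    gf K (AvL ν) + PowerSeries.X * gf K (AvL ν) * gf (K + 1) (AvBL ν K) := by
  apply PowerSeries.ext
  intro n
  rw [map_add, coeff_gf]
  cases n with
  | zero =>
    rw [coeff_XY_zero, add_zero, coeff_gf]
    norm_cast
    exact cnt_zero_congr (avbl_nil_iff ν K)
  | succ n =>
    rw [coeff_XY, coeff_gf]
    have h1 : cnt (K + 1) (fun l => AvBL ν K l ∧ K ∉ l) (n + 1) = cnt K (AvL ν) (n + 1) := by
      rw [cnt_drop]
      exact cnt_congr fun l _ hKl => avbl_of_kary ν K hKl
    have h2 : cnt (K + 1) (fun l => AvBL ν K l ∧ K ∈ l) (n + 1) =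
        ∑ p ∈ Finset.HasAntidiagonal.antidiagonal n, cnt K (AvL ν) p.1 * cnt (K + 1) (AvBL ν K) p.2 := by
      refine (cnt_mem_split K n (AvBL ν K)).trans ?_
      apply Finset.sum_congr rfl
      intro p _
      rw [← card_pair_cnt (AvL ν) (AvBL ν K)]
      apply Nat.card_congr
      exact (Equiv.subtypeEquivRight fun q => avbl_concat q.1.2.2).trans (prodSubtypeE (AvL ν) (AvBL ν K))
    have key : cnt (K + 1) (AvBL ν K) (n + 1) =
        cnt K (AvL ν) (n + 1) +
          ∑ p ∈ Finset.HasAntidiagonal.antidiagonal n, cnt K (AvL ν) p.1 * cnt (K + 1) (AvBL ν K) p.2 := by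
      refine (cnt_split (K + 1) (n + 1) (AvBL ν K) (fun l => K ∈ l)).trans ?_
      show cnt (K + 1) (fun l => AvBL ν K l ∧ K ∈ l) (n + 1) +
          cnt (K + 1) (fun l => AvBL ν K l ∧ K ∉ l) (n + 1) = _
      rw [h1, h2]
      ring
    rw [key]
    simp only [coeff_gf]
    push_cast
    ring

lemma recursion_W : gf (K + 1) (fun l => ¬ CSL τ ν l) =
    gf K (fun l => ¬ CSL τ ν l)
      + PowerSeries.X * gf K (AvL τ) * gf (K + 1) (fun l => ¬ CSL τ ν l)
      + PowerSeries.X * gf K (fun l => ¬ AvL τ l ∧ ¬ CSL τ ν l) * gf (K + 1) (AvBL ν K) := by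
  apply PowerSeries.ext
  intro n
  rw [map_add, map_add, coeff_gf]
  cases n with
  | zero =>
    rw [coeff_XY_zero, coeff_XY_zero, add_zero, add_zero, coeff_gf]
    norm_cast
    exact cnt_zero_congr Iff.rfl
  | succ n =>
    rw [coeff_XY, coeff_XY, coeff_gf]
    have h1 : cnt (K + 1) (fun l => ¬ CSL τ ν l ∧ K ∉ l) (n + 1)
        = cnt K (fun l => ¬ CSL τ ν l) (n + 1) := cnt_drop K (n + 1) _
    have h2 : cnt (K + 1) (fun l => ¬ CSL τ ν l ∧ K ∈ l) (n + 1) =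
        (∑ p ∈ Finset.HasAntidiagonal.antidiagonal n,
          cnt K (AvL τ) p.1 * cnt (K + 1) (fun l => ¬ CSL τ ν l) p.2)
        + (∑ p ∈ Finset.HasAntidiagonal.antidiagonal n,
          cnt K (fun l => ¬ AvL τ l ∧ ¬ CSL τ ν l) p.1 * cnt (K + 1) (AvBL ν K) p.2) := by
      refine ((cnt_mem_split K n (fun l => ¬ CSL τ ν l)).trans ?_).trans
        Finset.sum_add_distrib
      apply Finset.sum_congr rfl
      intro p _
      rw [← card_pair_cnt (AvL τ) (fun l => ¬ CSL τ ν l),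
          ← card_pair_cnt (fun l => ¬ AvL τ l ∧ ¬ CSL τ ν l) (AvBL ν K),
          ← Nat.card_sum]
      apply Nat.card_congr
      exact (Equiv.subtypeEquivRight fun q => notCSL_concat_iff q.1.2.2 q.2.2.2).trans
        ((subtypeOrEquiv' _ _ (fun q hR hS => hS.1.1 hR.1)).trans
          (Equiv.sumCongr (prodSubtypeE (AvL τ) (fun l => ¬ CSL τ ν l))
            (prodSubtypeE (fun l => ¬ AvL τ l ∧ ¬ CSL τ ν l) (AvBL ν K))))
    have key : cnt (K + 1) (fun l => ¬ CSL τ ν l) (n + 1) =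
        cnt K (fun l => ¬ CSL τ ν l) (n + 1)
        + (∑ p ∈ Finset.HasAntidiagonal.antidiagonal n,
            cnt K (AvL τ) p.1 * cnt (K + 1) (fun l => ¬ CSL τ ν l) p.2)
        + (∑ p ∈ Finset.HasAntidiagonal.antidiagonal n,
            cnt K (fun l => ¬ AvL τ l ∧ ¬ CSL τ ν l) p.1 * cnt (K + 1) (AvBL ν K) p.2) := by
      refine ((cnt_split (K + 1) (n + 1) (fun l => ¬ CSL τ ν l) (fun l => K ∈ l)).trans ?_)
      show cnt (K + 1) (fun l => ¬ CSL τ ν l ∧ K ∈ l) (n + 1) +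
          cnt (K + 1) (fun l => ¬ CSL τ ν l ∧ K ∉ l) (n + 1) = _
      rw [h1, h2]
      ring
    rw [key]
    simp only [coeff_gf]
    push_cast
    ring

lemma split_E1 : gf K (fun l => ¬ CSL τ ν l) =
    gf K (AvL τ) + gf K (fun l => ¬ AvL τ l ∧ ¬ CSL τ ν l) := by
  apply PowerSeries.ext
  intro n
  rw [map_add, coeff_gf, coeff_gf, coeff_gf]
  norm_cast
  refine (cnt_split K n (fun l => ¬ CSL τ ν l) (AvL τ)).trans ?_
  show cnt K (fun l => ¬ CSL τ ν l ∧ AvL τ l) n +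
      cnt K (fun l => ¬ CSL τ ν l ∧ ¬ AvL τ l) n = _
  congr 1
  · exact cnt_congr fun l _ _ =>
      ⟨fun h => h.2, fun h => ⟨fun hc => csl_imp_not_avl hc h, h⟩⟩
  · exact cnt_congr fun l _ _ => and_comm

end MainRec

theorem stmt5 (m₁ r₁ m₂ r₂ : ℕ) (τ : Fin m₁ → Fin r₁) (ν : Fin m₂ → Fin r₂)
    (k : ℕ) (hk : 1 ≤ k) :
    Ashuffle τ ν k * (1 - PowerSeries.X * Apat τ (k - 1)) *
        (1 - PowerSeries.X * Apat ν (k - 1)) =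
      Ashuffle τ ν (k - 1) - PowerSeries.X * Apat τ (k - 1) * Apat ν (k - 1) := by
  obtain ⟨K, rfl⟩ : ∃ K, k = K + 1 := ⟨k - 1, by omega⟩
  simp only [Nat.add_sub_cancel]
  rw [Ashuffle_eq τ ν (K + 1), Ashuffle_eq τ ν K, Apat_eq τ K, Apat_eq ν K]
  have e1 := split_E1 τ ν K
  have r1 := recursion_W τ ν K
  have r2 := recursion_Y ν K
  linear_combination ((1 : PowerSeries ℚ) - PowerSeries.X * gf K (AvL ν)) * r1
    + (PowerSeries.X * gf K (fun l => ¬ AvL τ l ∧ ¬ CSL τ ν l)) * r2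
    - (PowerSeries.X * gf K (AvL ν)) * e1
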